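/- arXiv:1605.06743 — 3 statements merged into one kernel-verified Lean document; each statement's English description precedes it below -/
import Mathlib

section
/- Let {φ_μ}_{μ=1}^m be an orthonormal family in L²(ℝ^p) and {φ'_{μ'}}_{μ'=1}^{m'} an orthonormal family in L²(ℝ^q), let A be a nonzero real m-by-m' matrix, and define h(x,y) = Σ_{μ,μ'} A_{μ,μ'} · φ_μ(x) · φ'_{μ'}(y). Then the infimum over all g ∈ L²(ℝ^p) and g' ∈ L²(ℝ^q) of ∫ (h(x,y) − g(x)·g'(y))² dx dy equals ‖A‖_F² − ‖A‖²_{op}, where ‖A‖_{op} is the ℓ²→ℓ² operator norm of A (its largest singular value). Consequently, the normalized L² distance of h from the set of separable functions equals √(1 − ‖A‖²_{op}/‖A‖_F²). -/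
open MeasureTheory

/-- The ℓ²→ℓ² operator norm (largest singular value) of a real matrix. -/
noncomputable def l2OpNorm {m m' : ℕ} (A : Matrix (Fin m) (Fin m') ℝ) : ℝ :=
  ‖LinearMap.toContinuousLinearMap (Matrix.toEuclideanLin A)‖

section Helpers

variable {γ : Type*} [MeasurableSpace γ] {μ : Measure γ}

/-- product of two L² functions is integrable -/
lemma aux_mul_int {f g : γ → ℝ} (hf : MemLp f 2 μ) (hg : MemLp g 2 μ) :
    Integrable (fun x => f x * g x) μ := by
  have hm : AEStronglyMeasurable (fun x => f x * g x) μ := hf.1.mul hg.1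
  refine Integrable.mono' (((hf.integrable_sq.add hg.integrable_sq)).div_const 2) hm ?_
  filter_upwards with x
  simp only [Pi.add_apply]
  rw [Real.norm_eq_abs, abs_mul]
  nlinarith [sq_nonneg (|f x| - |g x|), sq_abs (f x), sq_abs (g x), abs_nonneg (f x),
    abs_nonneg (g x)]

end Helpers

section ONB

variable {γ : Type*} [MeasureSpace γ] {ι : Type*} [Fintype ι] [DecidableEq ι]
variable {Ψ : ι → γ → ℝ}

lemma onb_sum_memℒp (hΨ2 : ∀ k, MemLp (Ψ k) 2 volume) (B : ι → ℝ) :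
    MemLp (fun x => ∑ k, B k * Ψ k x) 2 volume := by
  have H := memLp_finset_sum' (μ := volume) Finset.univ
    (fun k (_ : k ∈ Finset.univ) => (hΨ2 k).const_mul (B k))
  have heq : (∑ i : ι, fun x => B i * Ψ i x) = fun x => ∑ k, B k * Ψ k x := by
    funext x; simp
  rwa [heq] at H

/-- linearity: ∫ (∑ B Ψ) f = ∑ B ∫ Ψ f -/
lemma onb_sum_integral_mul (hΨ2 : ∀ k, MemLp (Ψ k) 2 volume) (B : ι → ℝ)
    {f : γ → ℝ} (hf : MemLp f 2 volume) :
    ∫ x, (∑ k, B k * Ψ k x) * f x = ∑ k, B k * ∫ x, Ψ k x * f x := by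
  have : ∀ x, (∑ k, B k * Ψ k x) * f x = ∑ k, B k * (Ψ k x * f x) := by
    intro x; rw [Finset.sum_mul]; exact Finset.sum_congr rfl fun k _ => by ring
  simp_rw [this]
  rw [integral_finset_sum _ (fun k _ => (aux_mul_int (hΨ2 k) hf).const_mul (B k))]
  exact Finset.sum_congr rfl fun k _ => by rw [integral_const_mul]

/-- ∫ (∑ B Ψ)² = ∑ B² for an orthonormal family -/
lemma onb_sum_sq_integral (hΨ2 : ∀ k, MemLp (Ψ k) 2 volume)
    (horth : ∀ k l, ∫ x, Ψ k x * Ψ l x = if k = l then (1:ℝ) else 0) (B : ι → ℝ) :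
    ∫ x, (∑ k, B k * Ψ k x) ^ 2 = ∑ k, B k ^ 2 := by
  have h1 : ∀ x, (∑ k, B k * Ψ k x) ^ 2 = (∑ k, B k * Ψ k x) * (∑ k, B k * Ψ k x) := by
    intro x; ring
  simp_rw [h1]
  rw [onb_sum_integral_mul hΨ2 B (onb_sum_memℒp hΨ2 B)]
  have h2 : ∀ k, ∫ x, Ψ k x * (∑ l, B l * Ψ l x) = B k := by
    intro k
    have : ∀ x, Ψ k x * (∑ l, B l * Ψ l x) = (∑ l, B l * Ψ l x) * Ψ k x := fun x => by ring
    simp_rw [this]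
    rw [onb_sum_integral_mul hΨ2 B (hΨ2 k)]
    simp_rw [horth]
    simp
  simp_rw [h2]
  exact Finset.sum_congr rfl fun k _ => by ring

/-- Bessel's inequality -/
lemma onb_bessel (hΨ2 : ∀ k, MemLp (Ψ k) 2 volume)
    (horth : ∀ k l, ∫ x, Ψ k x * Ψ l x = if k = l then (1:ℝ) else 0)
    {f : γ → ℝ} (hf : MemLp f 2 volume) :
    ∑ k, (∫ x, f x * Ψ k x) ^ 2 ≤ ∫ x, f x ^ 2 := by
  set b : ι → ℝ := fun k => ∫ x, f x * Ψ k x with hb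
  set s : γ → ℝ := fun x => ∑ k, b k * Ψ k x with hs
  have hsmem : MemLp s 2 volume := onb_sum_memℒp hΨ2 b
  have hfs : ∫ x, f x * s x = ∑ k, b k ^ 2 := by
    have : ∀ x, f x * s x = s x * f x := fun x => by ring
    simp_rw [this, hs]
    rw [onb_sum_integral_mul hΨ2 b hf]
    refine Finset.sum_congr rfl fun k _ => ?_
    have : ∫ x, Ψ k x * f x = b k := by
      rw [hb]; congr 1; funext x; ring
    rw [this]; ring
  have hss : ∫ x, s x ^ 2 = ∑ k, b k ^ 2 := onb_sum_sq_integral hΨ2 horth b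
  have h0 : 0 ≤ ∫ x, (f x - s x) ^ 2 := integral_nonneg fun x => sq_nonneg _
  have hexp : ∫ x, (f x - s x) ^ 2 = (∫ x, f x ^ 2) - 2 * (∫ x, f x * s x) + ∫ x, s x ^ 2 := by
    have hint1 : Integrable (fun x => f x ^ 2) volume := hf.integrable_sq
    have hint2 : Integrable (fun x => f x * s x) volume := aux_mul_int hf hsmem
    have hint3 : Integrable (fun x => s x ^ 2) volume := hsmem.integrable_sq
    have : ∀ x, (f x - s x) ^ 2 = f x ^ 2 - 2 * (f x * s x) + s x ^ 2 := fun x => by ring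
    simp_rw [this]
    have hint4 : Integrable (fun x => f x ^ 2 - 2 * (f x * s x)) volume :=
      hint1.sub (hint2.const_mul 2)
    rw [integral_add hint4 hint3, integral_sub hint1 (hint2.const_mul 2), integral_const_mul]
  rw [hexp, hfs, hss] at h0
  have hfin : ∑ k, b k ^ 2 ≤ ∫ x, f x ^ 2 := by linarith
  simpa [hb] using hfin

end ONB

section ProdHelpers

variable {α β : Type*} [MeasureSpace α] [MeasureSpace β]
  [SigmaFinite (volume : Measure α)] [SigmaFinite (volume : Measure β)]

lemma aux_prod_integrable {f : α → ℝ} {g : β → ℝ} (hf : Integrable f volume)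
    (hg : Integrable g volume) : Integrable (fun z : α × β => f z.1 * g z.2) volume := by
  rw [Measure.volume_eq_prod]
  exact hf.mul_prod hg

lemma aux_prod_integral (f : α → ℝ) (g : β → ℝ) :
    ∫ z : α × β, f z.1 * g z.2 = (∫ x, f x) * ∫ y, g y := by
  rw [Measure.volume_eq_prod]
  exact integral_prod_mul f g

lemma aux_prod_memℒp {f : α → ℝ} {g : β → ℝ} (hfm : Measurable f) (hf : MemLp f 2 volume)
    (hgm : Measurable g) (hg : MemLp g 2 volume) :
    MemLp (fun z : α × β => f z.1 * g z.2) 2 volume := by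
  have hm : AEStronglyMeasurable (fun z : α × β => f z.1 * g z.2) volume :=
    ((hfm.comp measurable_fst).mul (hgm.comp measurable_snd)).aestronglyMeasurable
  rw [memLp_two_iff_integrable_sq hm]
  have : ∀ z : α × β, (f z.1 * g z.2) ^ 2 = (f z.1 ^ 2) * (g z.2 ^ 2) := fun z => by ring
  simp_rw [this]
  exact aux_prod_integrable hf.integrable_sq hg.integrable_sq

end ProdHelpers

section MatrixLemmas

variable {m m' : ℕ} (A : Matrix (Fin m) (Fin m') ℝ)

lemma euclid_norm (b : Fin m → ℝ) :
    ‖(WithLp.equiv 2 (Fin m → ℝ)).symm b‖ = Real.sqrt (∑ μ, b μ ^ 2) := by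
  rw [EuclideanSpace.norm_eq]
  congr 1
  refine Finset.sum_congr rfl fun μ _ => ?_
  simp [Real.norm_eq_abs, sq_abs]

lemma inner_toCLM (b : Fin m → ℝ) (c : Fin m' → ℝ) :
    inner ℝ ((WithLp.equiv 2 (Fin m → ℝ)).symm b)
      (LinearMap.toContinuousLinearMap (Matrix.toEuclideanLin A)
        ((WithLp.equiv 2 (Fin m' → ℝ)).symm c)) = ∑ μ, ∑ ν, A μ ν * b μ * c ν := by
  simp only [LinearMap.coe_toContinuousLinearMap', Matrix.toEuclideanLin_apply,
    PiLp.inner_apply, RCLike.inner_apply, conj_trivial, WithLp.equiv_symm_apply, PiLp.toLp_apply,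
    WithLp.ofLp_toLp, Matrix.mulVec, dotProduct, Finset.mul_sum, Finset.sum_mul]
  exact Finset.sum_congr rfl fun μ _ => Finset.sum_congr rfl fun ν _ => by ring

lemma euclid_sum_sq {n : ℕ} (x : EuclideanSpace ℝ (Fin n)) :
    ∑ i, x i ^ 2 = ‖x‖ ^ 2 := by
  rw [EuclideanSpace.norm_eq, Real.sq_sqrt (Finset.sum_nonneg fun i _ => sq_nonneg _)]
  exact Finset.sum_congr rfl fun i _ => by simp [Real.norm_eq_abs, sq_abs]

lemma l2OpNorm_nonneg : 0 ≤ l2OpNorm A := norm_nonneg _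

lemma l2OpNorm_bound (b : Fin m → ℝ) (c : Fin m' → ℝ) :
    ∑ μ, ∑ ν, A μ ν * b μ * c ν ≤
      l2OpNorm A * (Real.sqrt (∑ μ, b μ ^ 2) * Real.sqrt (∑ ν, c ν ^ 2)) := by
  set T := LinearMap.toContinuousLinearMap (Matrix.toEuclideanLin A)
  set eb := (WithLp.equiv 2 (Fin m → ℝ)).symm b
  set ec := (WithLp.equiv 2 (Fin m' → ℝ)).symm c
  have h1 : ∑ μ, ∑ ν, A μ ν * b μ * c ν = inner ℝ eb (T ec) := (inner_toCLM A b c).symm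
  have h2 : (inner ℝ eb (T ec) : ℝ) ≤ ‖eb‖ * ‖T ec‖ := real_inner_le_norm _ _
  have h3 : ‖T ec‖ ≤ ‖T‖ * ‖ec‖ := T.le_opNorm ec
  have h4 : ‖eb‖ = Real.sqrt (∑ μ, b μ ^ 2) := euclid_norm b
  have h5 : ‖ec‖ = Real.sqrt (∑ ν, c ν ^ 2) := euclid_norm c
  have hnn : (0:ℝ) ≤ ‖eb‖ := norm_nonneg _
  calc ∑ μ, ∑ ν, A μ ν * b μ * c ν ≤ ‖eb‖ * ‖T ec‖ := h1 ▸ h2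
    _ ≤ ‖eb‖ * (‖T‖ * ‖ec‖) := by nlinarith [norm_nonneg (T ec)]
    _ = l2OpNorm A * (Real.sqrt (∑ μ, b μ ^ 2) * Real.sqrt (∑ ν, c ν ^ 2)) := by
        rw [h4, h5]; unfold l2OpNorm; ring

lemma l2OpNorm_pos (hA : A ≠ 0) : 0 < l2OpNorm A := by
  unfold l2OpNorm
  rw [norm_pos_iff]
  intro hT
  apply hA
  have h1 : LinearMap.toContinuousLinearMap (Matrix.toEuclideanLin A)
      = LinearMap.toContinuousLinearMap (Matrix.toEuclideanLin (0 : Matrix (Fin m) (Fin m') ℝ)) := by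
    rw [hT]; simp
  exact Matrix.toEuclideanLin.injective (LinearMap.toContinuousLinearMap.injective h1)

lemma l2OpNorm_attain (hA : A ≠ 0) :
    ∃ (b : Fin m → ℝ) (c : Fin m' → ℝ),
      (∑ μ, b μ ^ 2) = l2OpNorm A ∧ (∑ ν, c ν ^ 2) = l2OpNorm A ∧
      (∑ μ, ∑ ν, A μ ν * b μ * c ν) = (l2OpNorm A) ^ 2 := by
  classical
  set T := LinearMap.toContinuousLinearMap (Matrix.toEuclideanLin A) with hT
  have hσpos : 0 < l2OpNorm A := l2OpNorm_pos A hA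
  -- m' > 0
  have hm' : Nonempty (Fin m') := by
    by_contra hne
    apply hA
    ext i j
    exact absurd ⟨j⟩ hne
  -- sphere is nonempty and compact
  have hsph : ∃ x : EuclideanSpace ℝ (Fin m'), ‖x‖ = 1 := by
    obtain ⟨j⟩ := hm'
    exact ⟨EuclideanSpace.single j 1, by simp⟩
  obtain ⟨x₀, hx₀⟩ := hsph
  have hcpt : IsCompact (Metric.sphere (0 : EuclideanSpace ℝ (Fin m')) 1) :=
    isCompact_sphere 0 1
  have hcont : ContinuousOn (fun x : EuclideanSpace ℝ (Fin m') => ‖T x‖)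
      (Metric.sphere 0 1) := (T.continuous.norm).continuousOn
  obtain ⟨c₀, hc₀mem, hc₀max⟩ := hcpt.exists_isMaxOn ⟨x₀, by simpa using hx₀⟩ hcont
  have hc₀norm : ‖c₀‖ = 1 := by simpa using hc₀mem
  -- ‖T c₀‖ = ‖T‖
  have hmax : ∀ x : EuclideanSpace ℝ (Fin m'), ‖x‖ = 1 → ‖T x‖ ≤ ‖T c₀‖ := by
    intro x hx
    exact hc₀max (by simpa using hx)
  have hTc₀ : ‖T c₀‖ = ‖T‖ := by
    apply le_antisymm
    · calc ‖T c₀‖ ≤ ‖T‖ * ‖c₀‖ := T.le_opNorm c₀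
        _ = ‖T‖ := by rw [hc₀norm, mul_one]
    · apply ContinuousLinearMap.opNorm_le_bound _ (norm_nonneg _)
      intro x
      rcases eq_or_ne x 0 with rfl | hx
      · simp
      · have hxn : ‖x‖ ≠ 0 := norm_ne_zero_iff.2 hx
        have h1 : ‖T (‖x‖⁻¹ • x)‖ ≤ ‖T c₀‖ := by
          apply hmax
          rw [norm_smul, norm_inv, norm_norm, inv_mul_cancel₀ hxn]
        rw [ContinuousLinearMap.map_smul, norm_smul, norm_inv, norm_norm] at h1
        have hxpos : 0 < ‖x‖ := (norm_nonneg x).lt_of_ne' hxn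
        calc ‖T x‖ = ‖x‖ * (‖x‖⁻¹ * ‖T x‖) := by field_simp
          _ ≤ ‖x‖ * ‖T c₀‖ := by nlinarith
          _ = ‖T c₀‖ * ‖x‖ := mul_comm _ _
  set σ := l2OpNorm A with hσ
  have hσT : σ = ‖T‖ := rfl
  have hTc₀σ : ‖T c₀‖ = σ := by rw [hTc₀, hσT]
  -- define b, c
  set u : EuclideanSpace ℝ (Fin m) := σ⁻¹ • T c₀ with hu
  have hσnn : (0:ℝ) ≤ σ := le_of_lt hσpos
  have hunorm : ‖u‖ = 1 := by
    rw [hu, norm_smul, norm_inv, Real.norm_eq_abs, abs_of_pos hσpos, hTc₀σ,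
      inv_mul_cancel₀ (ne_of_gt hσpos)]
  have husq : ∑ μ, u μ ^ 2 = 1 := by
    rw [euclid_sum_sq, hunorm, one_pow]
  have hcsq : ∑ ν, c₀ ν ^ 2 = 1 := by
    rw [euclid_sum_sq, hc₀norm, one_pow]
  have hinner : ∑ μ, ∑ ν, A μ ν * u μ * c₀ ν = σ := by
    have h2 : (inner ℝ u (T c₀) : ℝ) = ∑ μ, ∑ ν, A μ ν * u μ * c₀ ν :=
      inner_toCLM A (fun μ => u μ) (fun ν => c₀ ν)
    rw [← h2, hu, real_inner_smul_left, real_inner_self_eq_norm_sq, hTc₀σ]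
    field_simp
  refine ⟨fun μ => Real.sqrt σ * u μ, fun ν => Real.sqrt σ * c₀ ν, ?_, ?_, ?_⟩
  · simp_rw [mul_pow, ← Finset.mul_sum]
    rw [husq, Real.sq_sqrt hσnn, mul_one]
  · simp_rw [mul_pow, ← Finset.mul_sum]
    rw [hcsq, Real.sq_sqrt hσnn, mul_one]
  · have hfact : ∑ μ, ∑ ν, A μ ν * (Real.sqrt σ * u μ) * (Real.sqrt σ * c₀ ν)
        = (Real.sqrt σ * Real.sqrt σ) * ∑ μ, ∑ ν, A μ ν * u μ * c₀ ν := by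
      rw [Finset.mul_sum]
      refine Finset.sum_congr rfl fun μ _ => ?_
      rw [Finset.mul_sum]
      refine Finset.sum_congr rfl fun ν _ => by ring
    rw [hfact, Real.mul_self_sqrt hσnn, hinner, sq]

end MatrixLemmas

theorem stmt14 (p q m m' : ℕ)
    (φ : Fin m → (Fin p → ℝ) → ℝ) (φ' : Fin m' → (Fin q → ℝ) → ℝ)
    (hφm : ∀ μ, Measurable (φ μ)) (hφ2 : ∀ μ, MemLp (φ μ) 2 volume)
    (hφ'm : ∀ μ', Measurable (φ' μ')) (hφ'2 : ∀ μ', MemLp (φ' μ') 2 volume)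
    (horth : ∀ μ ν : Fin m,
      ∫ x : Fin p → ℝ, φ μ x * φ ν x = if μ = ν then (1 : ℝ) else 0)
    (horth' : ∀ μ' ν' : Fin m',
      ∫ y : Fin q → ℝ, φ' μ' y * φ' ν' y = if μ' = ν' then (1 : ℝ) else 0)
    (A : Matrix (Fin m) (Fin m') ℝ) (hA : A ≠ 0)
    (h : (Fin p → ℝ) × (Fin q → ℝ) → ℝ)
    (hdef : ∀ (x : Fin p → ℝ) (y : Fin q → ℝ),
      h (x, y) = ∑ μ, ∑ μ', A μ μ' * (φ μ x * φ' μ' y)) :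
    IsGLB {t : ℝ | ∃ (g : (Fin p → ℝ) → ℝ) (g' : (Fin q → ℝ) → ℝ),
        Measurable g ∧ MemLp g 2 volume ∧ Measurable g' ∧ MemLp g' 2 volume ∧
        t = ∫ z : (Fin p → ℝ) × (Fin q → ℝ), (h z - g z.1 * g' z.2) ^ 2}
      ((∑ μ, ∑ μ', (A μ μ') ^ 2) - (l2OpNorm A) ^ 2) ∧
    IsGLB {t : ℝ | ∃ (g : (Fin p → ℝ) → ℝ) (g' : (Fin q → ℝ) → ℝ),
        Measurable g ∧ MemLp g 2 volume ∧ Measurable g' ∧ MemLp g' 2 volume ∧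
        t = Real.sqrt (∫ z : (Fin p → ℝ) × (Fin q → ℝ), (h z - g z.1 * g' z.2) ^ 2) /
          Real.sqrt (∫ z : (Fin p → ℝ) × (Fin q → ℝ), (h z) ^ 2)}
      (Real.sqrt (1 - (l2OpNorm A) ^ 2 / ∑ μ, ∑ μ', (A μ μ') ^ 2)) := by
  classical
  set σ : ℝ := l2OpNorm A with hσdef
  set S : ℝ := ∑ μ, ∑ μ', (A μ μ') ^ 2 with hSdef
  set Ψ : (Fin m × Fin m') → ((Fin p → ℝ) × (Fin q → ℝ)) → ℝ := fun k z => φ k.1 z.1 * φ' k.2 z.2 with hΨdef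
  set B : Fin m × Fin m' → ℝ := fun k => A k.1 k.2 with hBdef
  have hΨ2 : ∀ k, MemLp (Ψ k) 2 volume := fun k =>
    aux_prod_memℒp (hφm k.1) (hφ2 k.1) (hφ'm k.2) (hφ'2 k.2)
  have hΨorth : ∀ k l, ∫ z : (Fin p → ℝ) × (Fin q → ℝ), Ψ k z * Ψ l z = if k = l then (1:ℝ) else 0 := by
    intro k l
    have h1 : (fun z : (Fin p → ℝ) × (Fin q → ℝ) => Ψ k z * Ψ l z)
        = fun z => (fun x => φ k.1 x * φ l.1 x) z.1 * (fun y => φ' k.2 y * φ' l.2 y) z.2 :=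
      funext fun z => by simp only [hΨdef]; ring
    rw [h1, aux_prod_integral (fun x => φ k.1 x * φ l.1 x) (fun y => φ' k.2 y * φ' l.2 y)]
    rw [horth, horth']
    by_cases h1 : k.1 = l.1 <;> by_cases h2 : k.2 = l.2 <;>
      simp [Prod.ext_iff, h1, h2]
  have hsum : ∀ z : (Fin p → ℝ) × (Fin q → ℝ), h z = ∑ k : Fin m × Fin m', B k * Ψ k z := by
    intro z
    have := hdef z.1 z.2
    rw [Prod.mk.eta] at this
    rw [this, Fintype.sum_prod_type]
  have hS : ∫ z : (Fin p → ℝ) × (Fin q → ℝ), (h z) ^ 2 = S := by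
    simp_rw [hsum]
    rw [onb_sum_sq_integral hΨ2 hΨorth B, hSdef, Fintype.sum_prod_type]
  have hhmem : MemLp h 2 volume := by
    have : h = fun z => ∑ k : Fin m × Fin m', B k * Ψ k z := funext hsum
    rw [this]
    exact onb_sum_memℒp hΨ2 B
  -- the key identity
  have key : ∀ (g : (Fin p → ℝ) → ℝ) (g' : (Fin q → ℝ) → ℝ), Measurable g → MemLp g 2 volume →
      Measurable g' → MemLp g' 2 volume →
      ∫ z : (Fin p → ℝ) × (Fin q → ℝ), (h z - g z.1 * g' z.2) ^ 2
        = S - 2 * (∑ μ, ∑ ν, A μ ν * (∫ x, g x * φ μ x) * (∫ y, g' y * φ' ν y))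
          + (∫ x, g x ^ 2) * (∫ y, g' y ^ 2) := by
    intro g g' mg hg2 mg' hg'2
    set P : (Fin p → ℝ) × (Fin q → ℝ) → ℝ := fun z => g z.1 * g' z.2 with hPdef
    have hPmem : MemLp P 2 volume := aux_prod_memℒp mg hg2 mg' hg'2
    have hhP : ∫ z : (Fin p → ℝ) × (Fin q → ℝ), h z * P z
        = ∑ μ, ∑ ν, A μ ν * (∫ x, g x * φ μ x) * (∫ y, g' y * φ' ν y) := by
      simp_rw [hsum]
      rw [onb_sum_integral_mul hΨ2 B hPmem, Fintype.sum_prod_type]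
      refine Finset.sum_congr rfl fun μ _ => Finset.sum_congr rfl fun ν _ => ?_
      have h1 : (fun z : (Fin p → ℝ) × (Fin q → ℝ) => Ψ (μ, ν) z * P z)
          = fun z => (fun x => g x * φ μ x) z.1 * (fun y => g' y * φ' ν y) z.2 :=
        funext fun z => by simp only [hΨdef, hPdef]; ring
      rw [h1, aux_prod_integral (fun x => g x * φ μ x) (fun y => g' y * φ' ν y)]
      ring
    have hP2 : ∫ z : (Fin p → ℝ) × (Fin q → ℝ), P z ^ 2 = (∫ x, g x ^ 2) * (∫ y, g' y ^ 2) := by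
      have h1 : (fun z : (Fin p → ℝ) × (Fin q → ℝ) => P z ^ 2)
          = fun z => (fun x => g x ^ 2) z.1 * (fun y => g' y ^ 2) z.2 :=
        funext fun z => by simp only [hPdef]; ring
      rw [h1, aux_prod_integral (fun x => g x ^ 2) (fun y => g' y ^ 2)]
    have hint1 : Integrable (fun z : (Fin p → ℝ) × (Fin q → ℝ) => (h z) ^ 2) volume := hhmem.integrable_sq
    have hint2 : Integrable (fun z : (Fin p → ℝ) × (Fin q → ℝ) => h z * P z) volume := aux_mul_int hhmem hPmem
    have hint3 : Integrable (fun z : (Fin p → ℝ) × (Fin q → ℝ) => P z ^ 2) volume := hPmem.integrable_sq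
    have hexp : ∫ z : (Fin p → ℝ) × (Fin q → ℝ), (h z - P z) ^ 2
        = (∫ z : (Fin p → ℝ) × (Fin q → ℝ), (h z) ^ 2) - 2 * (∫ z : (Fin p → ℝ) × (Fin q → ℝ), h z * P z) + ∫ z : (Fin p → ℝ) × (Fin q → ℝ), P z ^ 2 := by
      have h2 : ∀ z : (Fin p → ℝ) × (Fin q → ℝ), (h z - P z) ^ 2 = (h z) ^ 2 - 2 * (h z * P z) + P z ^ 2 :=
        fun z => by ring
      simp_rw [h2]
      have hint4 : Integrable (fun z : (Fin p → ℝ) × (Fin q → ℝ) => (h z) ^ 2 - 2 * (h z * P z)) volume :=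
        hint1.sub (hint2.const_mul 2)
      rw [integral_add hint4 hint3, integral_sub hint1 (hint2.const_mul 2), integral_const_mul]
    calc ∫ z : (Fin p → ℝ) × (Fin q → ℝ), (h z - g z.1 * g' z.2) ^ 2 = ∫ z : (Fin p → ℝ) × (Fin q → ℝ), (h z - P z) ^ 2 := rfl
      _ = _ := by rw [hexp, hS, hhP, hP2]
  -- attainment
  obtain ⟨b, c, hbσ, hcσ, hbcσ⟩ := l2OpNorm_attain A hA
  set g₀ : (Fin p → ℝ) → ℝ := fun x => ∑ μ, b μ * φ μ x with hg₀def
  set g'₀ : (Fin q → ℝ) → ℝ := fun y => ∑ ν, c ν * φ' ν y with hg'₀def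
  have mg₀ : Measurable g₀ := by
    apply Finset.measurable_sum
    intro μ _
    exact (measurable_const.mul (hφm μ))
  have mg'₀ : Measurable g'₀ := by
    apply Finset.measurable_sum
    intro ν _
    exact (measurable_const.mul (hφ'm ν))
  have hg₀2 : MemLp g₀ 2 volume := onb_sum_memℒp hφ2 b
  have hg'₀2 : MemLp g'₀ 2 volume := onb_sum_memℒp hφ'2 c
  have hg₀coef : ∀ μ, ∫ x, g₀ x * φ μ x = b μ := by
    intro μ
    rw [hg₀def]
    rw [onb_sum_integral_mul hφ2 b (hφ2 μ)]
    simp_rw [horth]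
    simp
  have hg'₀coef : ∀ ν, ∫ y, g'₀ y * φ' ν y = c ν := by
    intro ν
    rw [hg'₀def]
    rw [onb_sum_integral_mul hφ'2 c (hφ'2 ν)]
    simp_rw [horth']
    simp
  have hg₀sq : ∫ x, g₀ x ^ 2 = σ := by
    rw [hg₀def, onb_sum_sq_integral hφ2 horth b, hbσ]
  have hg'₀sq : ∫ y, g'₀ y ^ 2 = σ := by
    rw [hg'₀def, onb_sum_sq_integral hφ'2 horth' c, hcσ]
  have hval : ∫ z : (Fin p → ℝ) × (Fin q → ℝ), (h z - g₀ z.1 * g'₀ z.2) ^ 2 = S - σ ^ 2 := by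
    rw [key g₀ g'₀ mg₀ hg₀2 mg'₀ hg'₀2]
    have h1 : ∑ μ, ∑ ν, A μ ν * (∫ x, g₀ x * φ μ x) * (∫ y, g'₀ y * φ' ν y)
        = ∑ μ, ∑ ν, A μ ν * b μ * c ν := by
      refine Finset.sum_congr rfl fun μ _ => Finset.sum_congr rfl fun ν _ => ?_
      rw [hg₀coef, hg'₀coef]
    rw [h1, hbcσ, hg₀sq, hg'₀sq]
    ring
  -- lower bound
  have hlow : ∀ (g : (Fin p → ℝ) → ℝ) (g' : (Fin q → ℝ) → ℝ), Measurable g → MemLp g 2 volume →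
      Measurable g' → MemLp g' 2 volume →
      S - σ ^ 2 ≤ ∫ z : (Fin p → ℝ) × (Fin q → ℝ), (h z - g z.1 * g' z.2) ^ 2 := by
    intro g g' mg hg2 mg' hg'2
    rw [key g g' mg hg2 mg' hg'2]
    set bb : Fin m → ℝ := fun μ => ∫ x, g x * φ μ x with hbb
    set cc : Fin m' → ℝ := fun ν => ∫ y, g' y * φ' ν y with hcc
    set Bq : ℝ := ∑ μ, bb μ ^ 2 with hBq
    set Cq : ℝ := ∑ ν, cc ν ^ 2 with hCq
    have hBqnn : 0 ≤ Bq := Finset.sum_nonneg fun μ _ => sq_nonneg _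
    have hCqnn : 0 ≤ Cq := Finset.sum_nonneg fun ν _ => sq_nonneg _
    have hbes : Bq ≤ ∫ x, g x ^ 2 := onb_bessel hφ2 horth hg2
    have hbes' : Cq ≤ ∫ y, g' y ^ 2 := onb_bessel hφ'2 horth' hg'2
    have hbnd : ∑ μ, ∑ ν, A μ ν * bb μ * cc ν ≤ σ * (Real.sqrt Bq * Real.sqrt Cq) :=
      l2OpNorm_bound A bb cc
    have hσnn : 0 ≤ σ := l2OpNorm_nonneg A
    have hsB : Real.sqrt Bq ^ 2 = Bq := Real.sq_sqrt hBqnn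
    have hsC : Real.sqrt Cq ^ 2 = Cq := Real.sq_sqrt hCqnn
    have hsBnn : 0 ≤ Real.sqrt Bq := Real.sqrt_nonneg _
    have hsCnn : 0 ≤ Real.sqrt Cq := Real.sqrt_nonneg _
    have hprod : Bq * Cq ≤ (∫ x, g x ^ 2) * (∫ y, g' y ^ 2) :=
      mul_le_mul hbes hbes' hCqnn (le_trans hBqnn hbes)
    nlinarith [sq_nonneg (Real.sqrt Bq * Real.sqrt Cq - σ)]
  have hglb1 : IsGLB {t : ℝ | ∃ (g : (Fin p → ℝ) → ℝ) (g' : (Fin q → ℝ) → ℝ),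
      Measurable g ∧ MemLp g 2 volume ∧ Measurable g' ∧ MemLp g' 2 volume ∧
      t = ∫ z : (Fin p → ℝ) × (Fin q → ℝ), (h z - g z.1 * g' z.2) ^ 2} (S - σ ^ 2) := by
    apply IsLeast.isGLB
    constructor
    · exact ⟨g₀, g'₀, mg₀, hg₀2, mg'₀, hg'₀2, hval.symm⟩
    · rintro t ⟨g, g', mg, hg2, mg', hg'2, rfl⟩
      exact hlow g g' mg hg2 mg' hg'2
  have hSpos : 0 < S := by
    have hij : ∃ i j, A i j ≠ 0 := by
      by_contra hc
      push_neg at hc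
      exact hA (Matrix.ext fun i j => hc i j)
    obtain ⟨i, j, hij⟩ := hij
    have h1 : A i j ^ 2 ≤ ∑ ν, A i ν ^ 2 :=
      Finset.single_le_sum (f := fun ν => A i ν ^ 2) (fun ν _ => sq_nonneg _) (Finset.mem_univ j)
    have h2 : ∑ ν, A i ν ^ 2 ≤ S :=
      Finset.single_le_sum (f := fun μ => ∑ ν, A μ ν ^ 2)
        (fun μ _ => Finset.sum_nonneg fun ν _ => sq_nonneg _) (Finset.mem_univ i)
    have h3 : 0 < A i j ^ 2 := by positivity
    linarith
  have hσ2S : σ ^ 2 ≤ S := by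
    have h0 : 0 ≤ ∫ z : (Fin p → ℝ) × (Fin q → ℝ), (h z - g₀ z.1 * g'₀ z.2) ^ 2 :=
      integral_nonneg fun z => sq_nonneg _
    rw [hval] at h0
    linarith
  have hsqrtS : 0 < Real.sqrt S := Real.sqrt_pos.2 hSpos
  have heq2 : Real.sqrt (1 - σ ^ 2 / S) = Real.sqrt (S - σ ^ 2) / Real.sqrt S := by
    rw [← Real.sqrt_div (by linarith) S]
    congr 1
    field_simp
  refine ⟨hglb1, ?_⟩
  apply IsLeast.isGLB
  constructor
  · refine ⟨g₀, g'₀, mg₀, hg₀2, mg'₀, hg'₀2, ?_⟩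
    rw [hval, hS, heq2]
  · rintro t ⟨g, g', mg, hg2, mg', hg'2, rfl⟩
    rw [hS, heq2]
    exact div_le_div_of_nonneg_right (Real.sqrt_le_sqrt (hlow g g' mg hg2 mg' hg'2)) hsqrtS.le
end

section
/- Let h ∈ L²(ℝ^p × ℝ^q) be nonzero, and suppose h(x,y) = Σ_{ν=1}^R g_ν(x)·g'_ν(y) for almost every (x,y), where R ≥ 1 and g₁,…,g_R ∈ L²(ℝ^p), g'₁,…,g'_R ∈ L²(ℝ^q). Then the infimum over all g ∈ L²(ℝ^p) and g' ∈ L²(ℝ^q) of the L² norm ‖h(x,y) − g(x)·g'(y)‖ is at most √(1 − 1/R) · ‖h‖. Equivalently, the normalized L² distance of h from the set of separable functions is at most √(1 − 1/sep), where sep is the separation rank of h. -/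
open MeasureTheory

lemma myIntMul {α : Type*} [MeasurableSpace α] {μ : Measure α} {a b : α → ℝ}
    (ha : MemLp a 2 μ) (hb : MemLp b 2 μ) : Integrable (fun x => a x * b x) μ := by
  rw [← memLp_one_iff_integrable]
  exact (hb.smul ha : MemLp (a • b) 1 μ)

lemma myIntSq {α : Type*} [MeasurableSpace α] {μ : Measure α} {a : α → ℝ}
    (ham : Measurable a) (ha : MemLp a 2 μ) : Integrable (fun x => a x ^ 2) μ :=
  (memLp_two_iff_integrable_sq ham.aestronglyMeasurable).1 ha

lemma myMem2Prod {α β : Type*} [MeasurableSpace α] [MeasurableSpace β]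
    {μ : Measure α} {ν : Measure β} [SigmaFinite μ] [SigmaFinite ν]
    {a : α → ℝ} {b : β → ℝ}
    (ham : Measurable a) (ha : MemLp a 2 μ) (hbm : Measurable b) (hb : MemLp b 2 ν) :
    MemLp (fun z : α × β => a z.1 * b z.2) 2 (μ.prod ν) := by
  have hmeas : Measurable (fun z : α × β => a z.1 * b z.2) :=
    (ham.comp measurable_fst).mul (hbm.comp measurable_snd)
  rw [memLp_two_iff_integrable_sq hmeas.aestronglyMeasurable]
  have := (myIntSq ham ha).mul_prod (myIntSq hbm hb) (ν := ν)
  simpa [mul_pow] using this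

theorem stmt15 (p q : ℕ) (h : (Fin p → ℝ) × (Fin q → ℝ) → ℝ)
    (hm : Measurable h) (h2 : MemLp h 2 volume)
    (hne : ¬ h =ᵐ[volume] (fun _ => (0 : ℝ)))
    (R : ℕ) (hR : 1 ≤ R)
    (g : Fin R → (Fin p → ℝ) → ℝ) (g' : Fin R → (Fin q → ℝ) → ℝ)
    (hgm : ∀ ν, Measurable (g ν)) (hg2 : ∀ ν, MemLp (g ν) 2 volume)
    (hg'm : ∀ ν, Measurable (g' ν)) (hg'2 : ∀ ν, MemLp (g' ν) 2 volume)
    (hdec : ∀ᵐ z : (Fin p → ℝ) × (Fin q → ℝ) ∂volume,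
      h z = ∑ ν, g ν z.1 * g' ν z.2) :
    sInf {t : ℝ | ∃ (g0 : (Fin p → ℝ) → ℝ) (g0' : (Fin q → ℝ) → ℝ),
        Measurable g0 ∧ MemLp g0 2 volume ∧ Measurable g0' ∧ MemLp g0' 2 volume ∧
        t = Real.sqrt (∫ z : (Fin p → ℝ) × (Fin q → ℝ), (h z - g0 z.1 * g0' z.2) ^ 2)}
      ≤ Real.sqrt (1 - 1 / (R : ℝ)) *
        Real.sqrt (∫ z : (Fin p → ℝ) × (Fin q → ℝ), (h z) ^ 2) := by
  classical
  have hvol : (volume : Measure ((Fin p → ℝ) × (Fin q → ℝ)))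
      = (volume : Measure (Fin p → ℝ)).prod (volume : Measure (Fin q → ℝ)) :=
    Measure.volume_eq_prod _ _
  set Pm : Measure ((Fin p → ℝ) × (Fin q → ℝ)) :=
    (volume : Measure (Fin p → ℝ)).prod (volume : Measure (Fin q → ℝ)) with hPm
  -- Gram matrices
  set A : Matrix (Fin R) (Fin R) ℝ := Matrix.of (fun a b => ∫ x, g a x * g b x) with hAdef
  set B : Matrix (Fin R) (Fin R) ℝ := Matrix.of (fun a b => ∫ y, g' a y * g' b y) with hBdef
  have hAe : ∀ a b, A a b = ∫ x, g a x * g b x := fun a b => rfl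
  have hBe : ∀ a b, B a b = ∫ y, g' a y * g' b y := fun a b => rfl
  have hBsymm : ∀ a b, B a b = B b a := by
    intro a b; rw [hBe, hBe]; simp_rw [mul_comm]
  have hAh : A.IsHermitian := by
    refine Matrix.ext fun a b => ?_
    simp only [Matrix.conjTranspose_apply, star_trivial]
    rw [hAe, hAe]; simp_rw [mul_comm]
  set U : Matrix (Fin R) (Fin R) ℝ := (hAh.eigenvectorUnitary : Matrix (Fin R) (Fin R) ℝ)
    with hUdef
  set d : Fin R → ℝ := hAh.eigenvalues with hddef
  have hUAU : star U * A * U = Matrix.diagonal d := by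
    have := hAh.conjStarAlgAut_star_eigenvectorUnitary
    simpa [RCLike.ofReal_real_eq_id] using this
  have hspec : A = U * Matrix.diagonal d * star U := by
    have := hAh.spectral_theorem
    simpa [RCLike.ofReal_real_eq_id] using this
  have hUU : star U * U = 1 := hAh.eigenvectorUnitary.2.1
  have hUU' : U * star U = 1 := hAh.eigenvectorUnitary.2.2
  have hAU : A * U = U * Matrix.diagonal d := by
    have h1 : U * (star U * A * U) = U * Matrix.diagonal d := by rw [hUAU]
    rw [← mul_assoc, ← mul_assoc, hUU', one_mul] at h1
    exact h1
  have hAUe : ∀ (a i : Fin R), (∑ b, A a b * U b i) = U a i * d i := by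
    intro a i
    have h1 : (A * U) a i = (U * Matrix.diagonal d) a i := by rw [hAU]
    rw [Matrix.mul_diagonal] at h1
    simpa [Matrix.mul_apply] using h1
  have hUcol : ∀ i, (∑ a, U a i * U a i) = 1 := by
    intro i
    have h1 : (star U * U) i i = (1 : Matrix (Fin R) (Fin R) ℝ) i i := by rw [hUU]
    simpa [Matrix.mul_apply, Matrix.star_apply, Matrix.one_apply] using h1
  have hUBU : ∀ j, (star U * B * U) j j = ∑ a, ∑ b, U a j * U b j * B a b := by
    intro j
    calc (star U * B * U) j j = ∑ b, (∑ a, U a j * B a b) * U b j := by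
          simp [Matrix.mul_apply, Matrix.star_apply]
      _ = ∑ b, ∑ a, U a j * B a b * U b j := by simp [Finset.sum_mul]
      _ = ∑ a, ∑ b, U a j * U b j * B a b := by
          rw [Finset.sum_comm]
          exact Finset.sum_congr rfl fun a _ => Finset.sum_congr rfl fun b _ => by ring
  -- trace identity
  have htrace : (∑ a, ∑ b, A a b * B a b) = ∑ j, d j * (star U * B * U) j j := by
    have e1 : (∑ a, ∑ b, A a b * B a b) = Matrix.trace (A * B) := by
      simp only [Matrix.trace, Matrix.diag, Matrix.mul_apply]
      exact Finset.sum_congr rfl fun a _ => Finset.sum_congr rfl fun b _ => by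
        rw [hBsymm a b]
    have e2 : Matrix.trace (A * B) = Matrix.trace (Matrix.diagonal d * (star U * B * U)) := by
      rw [hspec]
      calc (U * Matrix.diagonal d * star U * B).trace
          = (U * (Matrix.diagonal d * (star U * B))).trace := by rw [mul_assoc, mul_assoc]
        _ = ((Matrix.diagonal d * (star U * B)) * U).trace := Matrix.trace_mul_comm _ _
        _ = (Matrix.diagonal d * (star U * B * U)).trace := by rw [mul_assoc, mul_assoc]
    have e3 : Matrix.trace (Matrix.diagonal d * (star U * B * U))
        = ∑ j, d j * (star U * B * U) j j := by
      simp [Matrix.trace, Matrix.diag, Matrix.diagonal_mul]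
    rw [e1, e2, e3]
  -- choice of the best index
  obtain ⟨i, hi⟩ : ∃ i : Fin R, ∀ j : Fin R,
      d j * (star U * B * U) j j ≤ d i * (star U * B * U) i i := by
    have hne' : (Finset.univ : Finset (Fin R)).Nonempty := ⟨⟨0, hR⟩, Finset.mem_univ _⟩
    obtain ⟨i, -, hi⟩ := Finset.exists_max_image Finset.univ
      (fun j => d j * (star U * B * U) j j) hne'
    exact ⟨i, fun j => hi j (Finset.mem_univ j)⟩
  -- the rank-one approximation
  set f : (Fin p → ℝ) → ℝ := fun x => ∑ a, U a i * g a x with hfdef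
  set k : (Fin q → ℝ) → ℝ := fun y => ∑ a, U a i * g' a y with hkdef
  have hfm : Measurable f := by
    apply Finset.measurable_sum
    exact fun a _ => (hgm a).const_mul _
  have hkm : Measurable k := by
    apply Finset.measurable_sum
    exact fun a _ => (hg'm a).const_mul _
  have hf2 : MemLp f 2 volume :=
    memLp_finset_sum Finset.univ (fun a _ => (hg2 a).const_mul (U a i))
  have hk2 : MemLp k 2 volume :=
    memLp_finset_sum Finset.univ (fun a _ => (hg'2 a).const_mul (U a i))
  -- inner products
  have hIPg : ∀ a, (∫ x, g a x * f x) = U a i * d i := by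
    intro a
    have e0 : (fun x => g a x * f x) = fun x => ∑ b, U b i * (g a x * g b x) := by
      funext x
      rw [hfdef]
      rw [Finset.mul_sum]
      exact Finset.sum_congr rfl fun b _ => by ring
    rw [e0, integral_finset_sum _
      (fun b _ => (myIntMul (hg2 a) (hg2 b)).const_mul (U b i))]
    simp_rw [integral_const_mul]
    rw [← hAUe a i]
    exact Finset.sum_congr rfl fun b _ => by rw [hAe]; ring
  have hIPg' : ∀ a, (∫ y, g' a y * k y) = ∑ b, U b i * B a b := by
    intro a
    have e0 : (fun y => g' a y * k y) = fun y => ∑ b, U b i * (g' a y * g' b y) := by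
      funext y
      rw [hkdef]
      rw [Finset.mul_sum]
      exact Finset.sum_congr rfl fun b _ => by ring
    rw [e0, integral_finset_sum _
      (fun b _ => (myIntMul (hg'2 a) (hg'2 b)).const_mul (U b i))]
    simp_rw [integral_const_mul]
    exact Finset.sum_congr rfl fun b _ => by rw [hBe]
  have hfint : (∫ x, f x * f x) = d i := by
    have e0 : (fun x => f x * f x) = fun x => ∑ a, U a i * (g a x * f x) := by
      funext x
      conv_lhs => rw [hfdef]
      rw [Finset.sum_mul]
      exact Finset.sum_congr rfl fun a _ => by ring
    rw [e0, integral_finset_sum _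
      (fun a _ => (myIntMul (hg2 a) hf2).const_mul (U a i))]
    simp_rw [integral_const_mul, hIPg]
    have : (∑ a, U a i * (U a i * d i)) = (∑ a, U a i * U a i) * d i := by
      rw [Finset.sum_mul]
      exact Finset.sum_congr rfl fun a _ => by ring
    rw [this, hUcol, one_mul]
  have hkint : (∫ y, k y * k y) = (star U * B * U) i i := by
    have e0 : (fun y => k y * k y) = fun y => ∑ a, U a i * (g' a y * k y) := by
      funext y
      conv_lhs => rw [hkdef]
      rw [Finset.sum_mul]
      exact Finset.sum_congr rfl fun a _ => by ring
    rw [e0, integral_finset_sum _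
      (fun a _ => (myIntMul (hg'2 a) hk2).const_mul (U a i))]
    simp_rw [integral_const_mul, hIPg']
    rw [hUBU i]
    simp_rw [Finset.mul_sum]
    exact Finset.sum_congr rfl fun a _ => Finset.sum_congr rfl fun b _ => by ring
  -- product space computations
  set H : (Fin p → ℝ) × (Fin q → ℝ) → ℝ := fun z => ∑ a, g a z.1 * g' a z.2 with hHdef
  have hHm : Measurable H := by
    apply Finset.measurable_sum
    exact fun a _ => ((hgm a).comp measurable_fst).mul ((hg'm a).comp measurable_snd)
  have hHmem : MemLp H 2 Pm :=
    memLp_finset_sum Finset.univ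
      (fun a _ => myMem2Prod (hgm a) (hg2 a) (hg'm a) (hg'2 a))
  have hPmem : MemLp (fun z : (Fin p → ℝ) × (Fin q → ℝ) => f z.1 * k z.2) 2 Pm :=
    myMem2Prod hfm hf2 hkm hk2
  have hPm' : Measurable (fun z : (Fin p → ℝ) × (Fin q → ℝ) => f z.1 * k z.2) :=
    (hfm.comp measurable_fst).mul (hkm.comp measurable_snd)
  have hH2 : (∫ z, H z ^ 2 ∂Pm) = ∑ a, ∑ b, A a b * B a b := by
    have e0 : (fun z : (Fin p → ℝ) × (Fin q → ℝ) => H z ^ 2)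
        = fun z => ∑ a, ∑ b, (fun x => g a x * g b x) z.1 * (fun y => g' a y * g' b y) z.2 := by
      funext z
      rw [hHdef]
      rw [sq, Finset.sum_mul_sum]
      exact Finset.sum_congr rfl fun a _ => Finset.sum_congr rfl fun b _ => by ring
    rw [e0, integral_finset_sum _ (fun a _ => integrable_finset_sum _
      (fun b _ => (myIntMul (hg2 a) (hg2 b)).mul_prod (myIntMul (hg'2 a) (hg'2 b))))]
    refine Finset.sum_congr rfl fun a _ => ?_
    rw [integral_finset_sum _
      (fun b _ => (myIntMul (hg2 a) (hg2 b)).mul_prod (myIntMul (hg'2 a) (hg'2 b)))]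
    refine Finset.sum_congr rfl fun b _ => ?_
    exact integral_prod_mul (μ := (volume : Measure (Fin p → ℝ)))
      (ν := (volume : Measure (Fin q → ℝ))) (fun x => g a x * g b x) (fun y => g' a y * g' b y)
  have hHP : (∫ z, H z * (f z.1 * k z.2) ∂Pm) = d i * (star U * B * U) i i := by
    have e0 : (fun z : (Fin p → ℝ) × (Fin q → ℝ) => H z * (f z.1 * k z.2))
        = fun z => ∑ a, (fun x => g a x * f x) z.1 * (fun y => g' a y * k y) z.2 := by
      funext z
      rw [hHdef]
      rw [Finset.sum_mul]
      exact Finset.sum_congr rfl fun a _ => by ring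
    rw [e0, integral_finset_sum _
      (fun a _ => (myIntMul (hg2 a) hf2).mul_prod (myIntMul (hg'2 a) hk2))]
    trans (∑ a, (U a i * d i) * (∑ b, U b i * B a b))
    · refine Finset.sum_congr rfl fun a _ => ?_
      rw [← hIPg a, ← hIPg' a]
      exact integral_prod_mul (μ := (volume : Measure (Fin p → ℝ)))
        (ν := (volume : Measure (Fin q → ℝ))) (fun x => g a x * f x) (fun y => g' a y * k y)
    · rw [hUBU i, Finset.mul_sum]
      refine Finset.sum_congr rfl fun a _ => ?_
      rw [Finset.mul_sum, Finset.mul_sum]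
      exact Finset.sum_congr rfl fun b _ => by ring
  have hP2 : (∫ z, (f z.1 * k z.2) ^ 2 ∂Pm) = d i * (star U * B * U) i i := by
    have e0 : (fun z : (Fin p → ℝ) × (Fin q → ℝ) => (f z.1 * k z.2) ^ 2)
        = fun z => (fun x => f x * f x) z.1 * (fun y => k y * k y) z.2 := by
      funext z; ring
    rw [e0]
    calc (∫ z : (Fin p → ℝ) × (Fin q → ℝ),
          (fun x => f x * f x) z.1 * (fun y => k y * k y) z.2 ∂Pm)
        = (∫ x, f x * f x) * ∫ y, k y * k y :=
          integral_prod_mul (μ := (volume : Measure (Fin p → ℝ)))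
            (ν := (volume : Measure (Fin q → ℝ))) (fun x => f x * f x) (fun y => k y * k y)
      _ = d i * (star U * B * U) i i := by rw [hfint, hkint]
  -- the error integral
  have hE : (∫ z, (H z - f z.1 * k z.2) ^ 2 ∂Pm)
      = (∑ a, ∑ b, A a b * B a b) - d i * (star U * B * U) i i := by
    have e0 : (fun z : (Fin p → ℝ) × (Fin q → ℝ) => (H z - f z.1 * k z.2) ^ 2)
        = fun z => (H z ^ 2 - 2 * (H z * (f z.1 * k z.2))) + (f z.1 * k z.2) ^ 2 := by
      funext z; ring
    have iH2 : Integrable (fun z => H z ^ 2) Pm := myIntSq hHm hHmem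
    have iP2 : Integrable (fun z : (Fin p → ℝ) × (Fin q → ℝ) => (f z.1 * k z.2) ^ 2) Pm :=
      myIntSq hPm' hPmem
    have iHP : Integrable (fun z => H z * (f z.1 * k z.2)) Pm := myIntMul hHmem hPmem
    have iHP1 : Integrable (fun z : (Fin p → ℝ) × (Fin q → ℝ) =>
        2 * (H z * (f z.1 * k z.2))) Pm := iHP.const_mul 2
    have iHPsub : Integrable (fun z : (Fin p → ℝ) × (Fin q → ℝ) =>
        H z ^ 2 - 2 * (H z * (f z.1 * k z.2))) Pm :=
      Integrable.sub (f := fun z : (Fin p → ℝ) × (Fin q → ℝ) => H z ^ 2)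
        (g := fun z : (Fin p → ℝ) × (Fin q → ℝ) => 2 * (H z * (f z.1 * k z.2))) iH2 iHP1
    rw [e0, integral_add iHPsub iP2, integral_sub iH2 iHP1,
      integral_const_mul, hH2, hHP, hP2]
    ring
  -- transfer to `volume` and `h`
  have hcong1 : (∫ z, (h z) ^ 2) = ∫ z, H z ^ 2 ∂Pm := by
    rw [← hvol]
    refine integral_congr_ae ?_
    filter_upwards [hdec] with z hz
    rw [hz, hHdef]
  have hcong2 : (∫ z, (h z - f z.1 * k z.2) ^ 2) = ∫ z, (H z - f z.1 * k z.2) ^ 2 ∂Pm := by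
    rw [← hvol]
    refine integral_congr_ae ?_
    filter_upwards [hdec] with z hz
    rw [hz, hHdef]
  -- numerical conclusion
  set S : ℝ := ∑ a, ∑ b, A a b * B a b with hSdef
  set w : ℝ := d i * (star U * B * U) i i with hwdef
  have hR0 : (0 : ℝ) < (R : ℝ) := by exact_mod_cast Nat.lt_of_lt_of_le Nat.zero_lt_one hR
  have hSle : S ≤ (R : ℝ) * w := by
    rw [htrace]
    calc (∑ j, d j * (star U * B * U) j j) ≤ ∑ _j : Fin R, w :=
          Finset.sum_le_sum fun j _ => hi j
      _ = (R : ℝ) * w := by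
          rw [Finset.sum_const, Finset.card_univ, Fintype.card_fin, nsmul_eq_mul]
  have hEle : S - w ≤ (1 - 1 / (R : ℝ)) * S := by
    have hdiv : S / (R : ℝ) ≤ w := by
      rw [div_le_iff₀ hR0]
      linarith [hSle]
    have : (1 - 1 / (R : ℝ)) * S = S - S / (R : ℝ) := by ring
    rw [this]
    linarith
  have h1R : (0 : ℝ) ≤ 1 - 1 / (R : ℝ) := by
    have : 1 / (R : ℝ) ≤ 1 := by
      rw [div_le_one hR0]
      exact_mod_cast hR
    linarith
  -- final bound
  refine csInf_le_of_le (b := Real.sqrt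
      (∫ z : (Fin p → ℝ) × (Fin q → ℝ), (h z - f z.1 * k z.2) ^ 2)) ⟨0, ?_⟩ ?_ ?_
  · rintro t ⟨g0, g0', -, -, -, -, rfl⟩
    exact Real.sqrt_nonneg _
  · exact ⟨f, k, hfm, hf2, hkm, hk2, rfl⟩
  · rw [hcong2, hE, hcong1, hH2, ← Real.sqrt_mul h1R S]
    exact Real.sqrt_le_sqrt hEle
end

section
/- Let f₁,…,f_M ∈ L²(ℝ^s) be linearly independent. For disjoint index counts p, q ≥ 1, let V ⊆ L²((ℝ^s)^p) be the span of the functions (x₁,…,x_p) ↦ ∏_{t=1}^p f_{d(t)}(x_t) over tuples d ∈ [M]^p, let V' ⊆ L²((ℝ^s)^q) be the span of the analogous products over tuples in [M]^q, and let U ⊆ L²((ℝ^s)^{p+q}) be the span of the products over tuples in [M]^{p+q}. Suppose h ∈ U and h(x,y) = Σ_{ν=1}^R g_ν(x)·g'_ν(y) for some g_ν ∈ L²((ℝ^s)^p) and g'_ν ∈ L²((ℝ^s)^q). Let p_ν be the orthogonal projection of g_ν onto V and p'_ν the orthogonal projection of g'_ν onto V'. Then h(x,y) = Σ_{ν=1}^R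 p_ν(x)·p'_ν(y) (equality in L²((ℝ^s)^{p+q})). -/
open MeasureTheory

lemma aux_int_mul {α : Type*} [MeasurableSpace α] {μ : Measure α} {u v : α → ℝ}
    (hu : MemLp u 2 μ) (hv : MemLp v 2 μ) : Integrable (fun x => u x * v x) μ := by
  rw [← memLp_one_iff_integrable]
  have h1 : (1 : ENNReal) / 1 = 1 / 2 + 1 / 2 := by
    rw [ENNReal.div_add_div_same, one_div_one, one_add_one_eq_two,
      ENNReal.div_self two_ne_zero ENNReal.ofNat_ne_top]
  have heq : (fun x => u x * v x) = v • u := by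
    funext x; simp [mul_comm]
  rw [heq]
  exact hu.smul (r := 1) hv

lemma aux_prod_memL2 {s M : ℕ} (n : ℕ) (f : Fin M → (Fin s → ℝ) → ℝ)
    (hfm : ∀ j, Measurable (f j)) (hf2 : ∀ j, MemLp (f j) 2 volume)
    (d : Fin n → Fin M) :
    MemLp (fun x : Fin n → (Fin s → ℝ) => ∏ t, f (d t) (x t)) 2 volume ∧
      Measurable (fun x : Fin n → (Fin s → ℝ) => ∏ t, f (d t) (x t)) := by
  have hm : Measurable (fun x : Fin n → (Fin s → ℝ) => ∏ t, f (d t) (x t)) :=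
    Finset.measurable_prod _ fun t _ => (hfm (d t)).comp (measurable_pi_apply t)
  refine ⟨?_, hm⟩
  rw [memLp_two_iff_integrable_sq hm.aestronglyMeasurable]
  have heq : (fun x : Fin n → (Fin s → ℝ) => (∏ t, f (d t) (x t)) ^ 2)
      = fun x : Fin n → (Fin s → ℝ) => ∏ t, (f (d t) (x t)) ^ 2 := by
    funext x; rw [Finset.prod_pow]
  rw [heq]
  exact Integrable.fintype_prod (f := fun t a => (f (d t) a) ^ 2)
    fun t => (hf2 (d t)).integrable_sq

theorem stmt17 (s M p q : ℕ) (hp : 1 ≤ p) (hq : 1 ≤ q)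
    (f : Fin M → (Fin s → ℝ) → ℝ)
    (hfm : ∀ j, Measurable (f j)) (hf2 : ∀ j, MemLp (f j) 2 volume)
    (hfind : LinearIndependent ℝ f)
    (h : (Fin p → (Fin s → ℝ)) × (Fin q → (Fin s → ℝ)) → ℝ)
    -- `h ∈ U`, the span of the products of the representation functions:
    (C : (Fin p → Fin M) → (Fin q → Fin M) → ℝ)
    (hhU : ∀ (x : Fin p → (Fin s → ℝ)) (y : Fin q → (Fin s → ℝ)),
      h (x, y) = ∑ d : Fin p → Fin M, ∑ e : Fin q → Fin M,
        C d e * ((∏ t, f (d t) (x t)) * (∏ t, f (e t) (y t))))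
    (R : ℕ)
    (g : Fin R → (Fin p → (Fin s → ℝ)) → ℝ)
    (g' : Fin R → (Fin q → (Fin s → ℝ)) → ℝ)
    (hgm : ∀ ν, Measurable (g ν)) (hg2 : ∀ ν, MemLp (g ν) 2 volume)
    (hg'm : ∀ ν, Measurable (g' ν)) (hg'2 : ∀ ν, MemLp (g' ν) 2 volume)
    (hdec : ∀ x y, h (x, y) = ∑ ν, g ν x * g' ν y)
    (pproj : Fin R → (Fin p → (Fin s → ℝ)) → ℝ)
    (p'proj : Fin R → (Fin q → (Fin s → ℝ)) → ℝ)
    -- `pproj ν ∈ V` and `p'proj ν ∈ V'`: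
    (hpV : ∀ ν, ∃ c : (Fin p → Fin M) → ℝ,
      pproj ν = fun x => ∑ d : Fin p → Fin M, c d * ∏ t, f (d t) (x t))
    (hp'V : ∀ ν, ∃ c : (Fin q → Fin M) → ℝ,
      p'proj ν = fun y => ∑ e : Fin q → Fin M, c e * ∏ t, f (e t) (y t))
    -- `g ν - pproj ν ⟂ V` and `g' ν - p'proj ν ⟂ V'`:
    (hporth : ∀ ν (d : Fin p → Fin M),
      ∫ x : Fin p → (Fin s → ℝ), (g ν x - pproj ν x) * ∏ t, f (d t) (x t) = 0)
    (hp'orth : ∀ ν (e : Fin q → Fin M),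
      ∫ y : Fin q → (Fin s → ℝ), (g' ν y - p'proj ν y) * ∏ t, f (e t) (y t) = 0) :
    (fun z : (Fin p → (Fin s → ℝ)) × (Fin q → (Fin s → ℝ)) =>
        ∑ ν, pproj ν z.1 * p'proj ν z.2) =ᵐ[volume] h := by
  classical
  choose c hc using hpV
  choose c' hc' using hp'V
  -- shorthand for the basis products
  have hF2 : ∀ d : Fin p → Fin M,
      MemLp (fun x : Fin p → (Fin s → ℝ) => ∏ t, f (d t) (x t)) 2 volume :=
    fun d => (aux_prod_memL2 p f hfm hf2 d).1
  have hG2 : ∀ e : Fin q → Fin M,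
      MemLp (fun y : Fin q → (Fin s → ℝ) => ∏ t, f (e t) (y t)) 2 volume :=
    fun e => (aux_prod_memL2 q f hfm hf2 e).1
  have hpm2 : ∀ ν, MemLp (pproj ν) 2 volume := by
    intro ν
    rw [hc ν]
    exact memLp_finset_sum _ fun d _ => (hF2 d).const_mul (c ν d)
  have hp'm2 : ∀ ν, MemLp (p'proj ν) 2 volume := by
    intro ν
    rw [hc' ν]
    exact memLp_finset_sum _ fun e _ => (hG2 e).const_mul (c' ν e)
  -- the difference function
  set D : (Fin p → (Fin s → ℝ)) × (Fin q → (Fin s → ℝ)) → ℝ :=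
    fun z => h z - ∑ ν, pproj ν z.1 * p'proj ν z.2 with hDdef
  -- identity B : decomposition into orthogonal pieces
  have hB : ∀ z, D z = ∑ ν, ((g ν z.1 - pproj ν z.1) * g' ν z.2
      + pproj ν z.1 * (g' ν z.2 - p'proj ν z.2)) := by
    rintro ⟨x, y⟩
    show h (x, y) - ∑ ν, pproj ν x * p'proj ν y = _
    rw [hdec x y, ← Finset.sum_sub_distrib]
    exact Finset.sum_congr rfl fun ν _ => by ring
  -- identity A : D lies in the span U
  have hA : ∀ z, D z = ∑ d : Fin p → Fin M, ∑ e : Fin q → Fin M,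
      (C d e - ∑ ν, c ν d * c' ν e)
        * ((∏ t, f (d t) (z.1 t)) * (∏ t, f (e t) (z.2 t))) := by
    rintro ⟨x, y⟩
    have h1 : ∑ ν, pproj ν x * p'proj ν y
        = ∑ d : Fin p → Fin M, ∑ e : Fin q → Fin M,
          (∑ ν, c ν d * c' ν e) * ((∏ t, f (d t) (x t)) * (∏ t, f (e t) (y t))) := by
      calc ∑ ν, pproj ν x * p'proj ν y
          = ∑ ν, ∑ d : Fin p → Fin M, ∑ e : Fin q → Fin M,
            (c ν d * c' ν e) * ((∏ t, f (d t) (x t)) * (∏ t, f (e t) (y t))) := by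
            refine Finset.sum_congr rfl fun ν _ => ?_
            rw [hc ν, hc' ν]
            rw [Finset.sum_mul_sum]
            exact Finset.sum_congr rfl fun d _ =>
              Finset.sum_congr rfl fun e _ => by ring
        _ = ∑ d : Fin p → Fin M, ∑ ν, ∑ e : Fin q → Fin M,
            (c ν d * c' ν e) * ((∏ t, f (d t) (x t)) * (∏ t, f (e t) (y t))) :=
            Finset.sum_comm
        _ = ∑ d : Fin p → Fin M, ∑ e : Fin q → Fin M, ∑ ν,
            (c ν d * c' ν e) * ((∏ t, f (d t) (x t)) * (∏ t, f (e t) (y t))) :=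
            Finset.sum_congr rfl fun d _ => Finset.sum_comm
        _ = _ := by
            refine Finset.sum_congr rfl fun d _ => Finset.sum_congr rfl fun e _ => ?_
            rw [Finset.sum_mul]
    show h (x, y) - ∑ ν, pproj ν x * p'proj ν y = _
    rw [hhU x y, h1, ← Finset.sum_sub_distrib]
    refine Finset.sum_congr rfl fun d _ => ?_
    rw [← Finset.sum_sub_distrib]
    exact Finset.sum_congr rfl fun e _ => by ring
  -- key : D is orthogonal to every basis product, with integrability
  have hDB : ∀ (d : Fin p → Fin M) (e : Fin q → Fin M),
      Integrable (fun z : (Fin p → (Fin s → ℝ)) × (Fin q → (Fin s → ℝ)) =>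
        D z * ((∏ t, f (d t) (z.1 t)) * (∏ t, f (e t) (z.2 t)))) volume ∧
      ∫ z : (Fin p → (Fin s → ℝ)) × (Fin q → (Fin s → ℝ)),
        D z * ((∏ t, f (d t) (z.1 t)) * (∏ t, f (e t) (z.2 t))) = 0 := by
    intro d e
    have int1 : ∀ ν, Integrable (fun z : (Fin p → (Fin s → ℝ)) × (Fin q → (Fin s → ℝ)) =>
        ((g ν z.1 - pproj ν z.1) * ∏ t, f (d t) (z.1 t))
          * (g' ν z.2 * ∏ t, f (e t) (z.2 t))) volume := by
      intro ν
      exact Integrable.mul_prod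
        (aux_int_mul ((hg2 ν).sub (hpm2 ν)) (hF2 d))
        (aux_int_mul (hg'2 ν) (hG2 e))
    have int2 : ∀ ν, Integrable (fun z : (Fin p → (Fin s → ℝ)) × (Fin q → (Fin s → ℝ)) =>
        (pproj ν z.1 * ∏ t, f (d t) (z.1 t))
          * ((g' ν z.2 - p'proj ν z.2) * ∏ t, f (e t) (z.2 t))) volume := by
      intro ν
      exact Integrable.mul_prod
        (aux_int_mul (hpm2 ν) (hF2 d))
        (aux_int_mul ((hg'2 ν).sub (hp'm2 ν)) (hG2 e))
    have hfun : (fun z : (Fin p → (Fin s → ℝ)) × (Fin q → (Fin s → ℝ)) =>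
        D z * ((∏ t, f (d t) (z.1 t)) * (∏ t, f (e t) (z.2 t))))
        = fun z => ∑ ν,
          (((g ν z.1 - pproj ν z.1) * ∏ t, f (d t) (z.1 t))
              * (g' ν z.2 * ∏ t, f (e t) (z.2 t))
           + (pproj ν z.1 * ∏ t, f (d t) (z.1 t))
              * ((g' ν z.2 - p'proj ν z.2) * ∏ t, f (e t) (z.2 t))) := by
      funext z
      rw [hB z, Finset.sum_mul]
      exact Finset.sum_congr rfl fun ν _ => by ring
    constructor
    · rw [hfun]
      exact integrable_finset_sum _ fun ν _ => (int1 ν).add (int2 ν)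
    · rw [hfun]
      calc ∫ z : (Fin p → (Fin s → ℝ)) × (Fin q → (Fin s → ℝ)), ∑ ν,
              (((g ν z.1 - pproj ν z.1) * ∏ t, f (d t) (z.1 t))
                  * (g' ν z.2 * ∏ t, f (e t) (z.2 t))
               + (pproj ν z.1 * ∏ t, f (d t) (z.1 t))
                  * ((g' ν z.2 - p'proj ν z.2) * ∏ t, f (e t) (z.2 t)))
          = ∑ ν, ∫ z : (Fin p → (Fin s → ℝ)) × (Fin q → (Fin s → ℝ)),
              (((g ν z.1 - pproj ν z.1) * ∏ t, f (d t) (z.1 t))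
                  * (g' ν z.2 * ∏ t, f (e t) (z.2 t))
               + (pproj ν z.1 * ∏ t, f (d t) (z.1 t))
                  * ((g' ν z.2 - p'proj ν z.2) * ∏ t, f (e t) (z.2 t))) :=
            integral_finset_sum _ fun ν _ => (int1 ν).add (int2 ν)
        _ = 0 := by
            refine Finset.sum_eq_zero fun ν _ => ?_
            have e0 := integral_add (int1 ν) (int2 ν)
            rw [e0]
            have e1 : (∫ z : (Fin p → (Fin s → ℝ)) × (Fin q → (Fin s → ℝ)),
                ((g ν z.1 - pproj ν z.1) * ∏ t, f (d t) (z.1 t))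
                  * (g' ν z.2 * ∏ t, f (e t) (z.2 t)))
                = (∫ x : Fin p → (Fin s → ℝ), (g ν x - pproj ν x) * ∏ t, f (d t) (x t))
                  * ∫ y : Fin q → (Fin s → ℝ), g' ν y * ∏ t, f (e t) (y t) :=
              integral_prod_mul (fun x : Fin p → (Fin s → ℝ) =>
                (g ν x - pproj ν x) * ∏ t, f (d t) (x t))
                (fun y : Fin q → (Fin s → ℝ) => g' ν y * ∏ t, f (e t) (y t))
            have e2 : (∫ z : (Fin p → (Fin s → ℝ)) × (Fin q → (Fin s → ℝ)),
                (pproj ν z.1 * ∏ t, f (d t) (z.1 t))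
                  * ((g' ν z.2 - p'proj ν z.2) * ∏ t, f (e t) (z.2 t)))
                = (∫ x : Fin p → (Fin s → ℝ), pproj ν x * ∏ t, f (d t) (x t))
                  * ∫ y : Fin q → (Fin s → ℝ), (g' ν y - p'proj ν y) * ∏ t, f (e t) (y t) :=
              integral_prod_mul (fun x : Fin p → (Fin s → ℝ) =>
                pproj ν x * ∏ t, f (d t) (x t))
                (fun y : Fin q → (Fin s → ℝ) =>
                  (g' ν y - p'proj ν y) * ∏ t, f (e t) (y t))
            rw [e1, e2, hporth ν d, hp'orth ν e]
            ring
  -- the square of D written via identity A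
  have hsqeq : (fun z : (Fin p → (Fin s → ℝ)) × (Fin q → (Fin s → ℝ)) => D z ^ 2)
      = fun z => ∑ d : Fin p → Fin M, ∑ e : Fin q → Fin M,
        (C d e - ∑ ν, c ν d * c' ν e)
          * (D z * ((∏ t, f (d t) (z.1 t)) * (∏ t, f (e t) (z.2 t)))) := by
    funext z
    conv_lhs => rw [sq, hA z]
    rw [Finset.sum_mul]
    refine Finset.sum_congr rfl fun d _ => ?_
    rw [Finset.sum_mul]
    refine Finset.sum_congr rfl fun e _ => ?_
    rw [hA z]
    ring
  have hsqint : Integrable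
      (fun z : (Fin p → (Fin s → ℝ)) × (Fin q → (Fin s → ℝ)) => D z ^ 2) volume := by
    rw [hsqeq]
    exact integrable_finset_sum _ fun d _ =>
      integrable_finset_sum _ fun e _ => ((hDB d e).1).const_mul _
  have hint0 : ∫ z : (Fin p → (Fin s → ℝ)) × (Fin q → (Fin s → ℝ)), D z ^ 2 = 0 := by
    rw [hsqeq]
    calc (∫ z : (Fin p → (Fin s → ℝ)) × (Fin q → (Fin s → ℝ)),
            ∑ d : Fin p → Fin M, ∑ e : Fin q → Fin M,
              (C d e - ∑ ν, c ν d * c' ν e)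
                * (D z * ((∏ t, f (d t) (z.1 t)) * (∏ t, f (e t) (z.2 t)))))
        = ∑ d : Fin p → Fin M, ∫ z : (Fin p → (Fin s → ℝ)) × (Fin q → (Fin s → ℝ)),
            ∑ e : Fin q → Fin M,
              (C d e - ∑ ν, c ν d * c' ν e)
                * (D z * ((∏ t, f (d t) (z.1 t)) * (∏ t, f (e t) (z.2 t)))) :=
          integral_finset_sum _ fun d _ =>
            integrable_finset_sum _ fun e _ => ((hDB d e).1).const_mul _
      _ = ∑ d : Fin p → Fin M, ∑ e : Fin q → Fin M,
            ∫ z : (Fin p → (Fin s → ℝ)) × (Fin q → (Fin s → ℝ)),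
              (C d e - ∑ ν, c ν d * c' ν e)
                * (D z * ((∏ t, f (d t) (z.1 t)) * (∏ t, f (e t) (z.2 t)))) :=
          Finset.sum_congr rfl fun d _ =>
            integral_finset_sum _ fun e _ => ((hDB d e).1).const_mul _
      _ = 0 := by
          refine Finset.sum_eq_zero fun d _ => Finset.sum_eq_zero fun e _ => ?_
          rw [integral_const_mul, (hDB d e).2, mul_zero]
  have hae : (fun z : (Fin p → (Fin s → ℝ)) × (Fin q → (Fin s → ℝ)) => D z ^ 2)
      =ᵐ[volume] 0 :=
    (integral_eq_zero_iff_of_nonneg (fun z => sq_nonneg (D z)) hsqint).mp hint0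
  filter_upwards [hae] with z hz
  have hz' : D z ^ 2 = 0 := hz
  have hz0 : D z = 0 := by
    have := pow_eq_zero_iff (n := 2) (by norm_num) |>.mp hz'
    exact this
  have : h z - ∑ ν, pproj ν z.1 * p'proj ν z.2 = 0 := hz0
  linarith
end
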